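/- Let d ≥ 2, p ∈ (0, 2], and suppose there exist M = d(d+1)/2 unit vectors φ_1, …, φ_M in ℝ^d with ⟨φ_i, φ_j⟩² = 1/(d+2) for all i ≠ j (a maximal equiangular tight frame). Then for every Borel probability measure μ on the unit sphere S^{d−1} ⊂ ℝ^d, ∫∫ |⟨x, y⟩² − 1/(d+2)|^p dμ(x) dμ(y) ≥ (2/(d(d+1))) · ((d+1)/(d+2))^p, and equality holds when μ is the uniform (counting) probability measure on {φ_1, …, φ_M}. In particular, the uniform distribution over the points of a maximal equiangular tight frame minimizes the energy I_{α,p} with α² = 1/(d+2). -/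

import Mathlib

open RealInnerProductSpace MeasureTheory
open scoped ENNReal

variable {d : ℕ}

noncomputable def Zm (d : ℕ) (x : EuclideanSpace ℝ (Fin d)) : EuclideanSpace ℝ (Fin d × Fin d) :=
  (WithLp.equiv 2 _).symm fun ij => x ij.1 * x ij.2 - (if ij.1 = ij.2 then (1:ℝ)/d else 0)

lemma inner_Zm (d : ℕ) (hd : (d:ℝ) ≠ 0) (x y : EuclideanSpace ℝ (Fin d))
    (hx : ⟪x,x⟫ = 1) (hy : ⟪y,y⟫ = 1) :
    ⟪Zm d x, Zm d y⟫ = ⟪x,y⟫ ^ 2 - 1/d := by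
  have hxx : ∑ i, x i * x i = 1 := by rw [PiLp.inner_apply] at hx; simpa [RCLike.inner_apply, ← sq] using hx
  have hyy : ∑ i, y i * y i = 1 := by rw [PiLp.inner_apply] at hy; simpa [RCLike.inner_apply, ← sq] using hy
  have hxy : ⟪x,y⟫ = ∑ i, x i * y i := by rw [PiLp.inner_apply]; simp [RCLike.inner_apply']; exact Finset.sum_congr rfl fun i _ => mul_comm _ _
  rw [PiLp.inner_apply]
  simp only [RCLike.inner_apply', conj_trivial, Zm, WithLp.equiv_symm_apply, PiLp.toLp_apply]
  rw [Fintype.sum_prod_type]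
  have expand : ∀ i j : Fin d,
      (x i * x j - (if i = j then (1:ℝ)/d else 0)) * (y i * y j - (if i = j then (1:ℝ)/d else 0))
      = (x i * y i) * (x j * y j) - (if i = j then (x i * x j)/d else 0)
        - (if i = j then (y i * y j)/d else 0) + (if i = j then (1:ℝ)/(d:ℝ)^2 else 0) := by
    intro i j
    by_cases h : i = j <;> simp [h] <;> ring
  simp only [expand]
  simp only [Finset.sum_add_distrib, Finset.sum_sub_distrib, Finset.sum_ite_eq, Finset.mem_univ,
    if_true]
  rw [← Finset.sum_div, ← Finset.sum_div, hxx, hyy, ← Finset.sum_mul_sum, ← hxy]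
  simp only [Finset.sum_const, Finset.card_univ, Fintype.card_fin, nsmul_eq_mul]
  field_simp
  ring

noncomputable def Wm (d : ℕ) (x : EuclideanSpace ℝ (Fin d)) :
    EuclideanSpace ℝ ((Fin d × Fin d) × (Fin d × Fin d)) :=
  (WithLp.equiv 2 _).symm fun ab => Zm d x ab.1 * Zm d x ab.2

noncomputable def P0 (d : ℕ) (a b : Fin d × Fin d) : ℝ :=
  (if a = b then 1 else 0)/2 + (if a = b.swap then 1 else 0)/2
    - (if a.1 = a.2 then (1:ℝ) else 0) * (if b.1 = b.2 then 1 else 0)/d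

noncomputable def Pm (d : ℕ) : EuclideanSpace ℝ ((Fin d × Fin d) × (Fin d × Fin d)) :=
  (WithLp.equiv 2 _).symm fun ab => P0 d ab.1 ab.2

-- generic: contraction with P0
lemma sum_mul_P0 (f : Fin d × Fin d → ℝ) (a : Fin d × Fin d) :
    ∑ b, f b * P0 d a b
      = f a / 2 + f a.swap / 2
        - (if a.1 = a.2 then (1:ℝ) else 0) * (∑ b, f b * (if b.1 = b.2 then (1:ℝ) else 0)) / d := by
  have key : ∀ b : Fin d × Fin d, f b * P0 d a b
      = (if a = b then f b / 2 else 0) + (if b = a.swap then f b / 2 else 0)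
        - (if a.1 = a.2 then (1:ℝ) else 0) * (f b * (if b.1 = b.2 then (1:ℝ) else 0)) / d := by
    intro b
    have h2 : (a = b.swap) ↔ (b = a.swap) := by
      constructor <;> intro h <;> simp [h]
    unfold P0
    simp only [h2]
    split_ifs with ha hb hd1 hd2 hb hd1 hd2 <;>
      first
        | ring
        | (exfalso; (try subst ha) <;> (try subst hb) <;> simp_all [Prod.ext_iff] <;> tauto)
  rw [Finset.sum_congr rfl fun b _ => key b]
  simp only [Finset.sum_sub_distrib, Finset.sum_add_distrib, Finset.sum_ite_eq,
    Finset.sum_ite_eq', Finset.mem_univ, if_true]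
  rw [← Finset.sum_div, ← Finset.mul_sum]

lemma diag_sum : ∑ a : Fin d × Fin d, (if a.1 = a.2 then (1:ℝ) else 0) = d := by
  rw [Fintype.sum_prod_type]
  simp

lemma Zm_symm (x : EuclideanSpace ℝ (Fin d)) (a : Fin d × Fin d) :
    Zm d x a.swap = Zm d x a := by
  show x a.2 * x a.1 - _ = x a.1 * x a.2 - _
  rw [mul_comm]
  congr 1
  simp [eq_comm]

lemma Zm_trace (x : EuclideanSpace ℝ (Fin d)) (hd : (d:ℝ) ≠ 0)
    (hxx : ∑ i, x i * x i = 1) :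
    ∑ b : Fin d × Fin d, Zm d x b * (if b.1 = b.2 then (1:ℝ) else 0) = 0 := by
  rw [Fintype.sum_prod_type]
  have : ∀ i j : Fin d, Zm d x (i, j) * (if (i,j).1 = (i,j).2 then (1:ℝ) else 0)
      = if i = j then x i * x j - 1/d else 0 := by
    intro i j
    by_cases h : i = j
    · subst h; simp [Zm]
    · simp [h, Zm]
  simp only [this, Finset.sum_ite_eq, Finset.mem_univ, if_true]
  rw [Finset.sum_sub_distrib, hxx]
  simp [hd]

lemma P0_diag_contract (hd : (d:ℝ) ≠ 0) (a : Fin d × Fin d) :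
    ∑ b, (if b.1 = b.2 then (1:ℝ) else 0) * P0 d a b = 0 := by
  rw [sum_mul_P0]
  have h1 : (if a.swap.1 = a.swap.2 then (1:ℝ) else 0) = (if a.1 = a.2 then 1 else 0) := by
    simp [eq_comm]
  have h2 : ∀ b : Fin d × Fin d, (if b.1 = b.2 then (1:ℝ) else 0) * (if b.1 = b.2 then (1:ℝ) else 0)
      = (if b.1 = b.2 then (1:ℝ) else 0) := by
    intro b; by_cases h : b.1 = b.2 <;> simp [h]
  simp only [h1]
  rw [Finset.sum_congr rfl fun b _ => h2 b, diag_sum]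
  field_simp
  norm_num

lemma norm_Pm_sq (hd : (d:ℝ) ≠ 0) : ⟪Pm d, Pm d⟫ = ((d:ℝ)^2 + d - 2)/2 := by
  rw [PiLp.inner_apply]
  simp only [RCLike.inner_apply', conj_trivial, Pm, WithLp.equiv_symm_apply, PiLp.toLp_apply]
  rw [Fintype.sum_prod_type]
  have inner_sum : ∀ a : Fin d × Fin d, ∑ b, P0 d a b * P0 d a b
      = 1/2 + (if a.1 = a.2 then (1:ℝ) else 0)/2 - (if a.1 = a.2 then (1:ℝ) else 0)/d := by
    intro a
    rw [sum_mul_P0]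
    have e1 : P0 d a a = 1/2 + (if a.1 = a.2 then (1:ℝ) else 0)/2
        - (if a.1 = a.2 then (1:ℝ) else 0)/d := by
      unfold P0
      have : (a = a.swap) ↔ a.1 = a.2 := by
        constructor
        · intro h; exact (Prod.ext_iff.1 h).1
        · intro h; ext <;> simp [h]
      simp only [this]
      by_cases h : a.1 = a.2 <;> simp [h]
    have e2 : P0 d a a.swap = (if a.1 = a.2 then (1:ℝ) else 0)/2 + 1/2
        - (if a.1 = a.2 then (1:ℝ) else 0)/d := by
      unfold P0
      have h1 : (a = a.swap) ↔ a.1 = a.2 := by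
        constructor
        · intro h; exact (Prod.ext_iff.1 h).1
        · intro h; ext <;> simp [h]
      have h3 : (a.swap.1 = a.swap.2) ↔ a.1 = a.2 := by simp [eq_comm]
      simp only [Prod.swap_swap, h1, h3]
      by_cases h : a.1 = a.2 <;> simp [h]
    have e3 : ∑ b, P0 d a b * (if b.1 = b.2 then (1:ℝ) else 0) = 0 := by
      rw [Finset.sum_congr rfl fun b _ => mul_comm _ _]
      exact P0_diag_contract hd a
    rw [e1, e2, e3]
    ring
  have reshape : ∀ a : Fin d × Fin d, (1/2 + (if a.1 = a.2 then (1:ℝ) else 0)/2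
      - (if a.1 = a.2 then (1:ℝ) else 0)/d) = 1/2 + (if a.1 = a.2 then (1:ℝ) else 0) * (1/2 - 1/d) :=
    fun a => by ring
  rw [Finset.sum_congr rfl fun a _ => inner_sum a,
    Finset.sum_congr rfl fun a _ => reshape a,
    Finset.sum_add_distrib, ← Finset.sum_mul, diag_sum]
  simp only [Finset.sum_const, Finset.card_univ, Fintype.card_prod, Fintype.card_fin,
    nsmul_eq_mul]
  field_simp
  push_cast
  ring

lemma inner_Wm (x y : EuclideanSpace ℝ (Fin d)) :
    ⟪Wm d x, Wm d y⟫ = ⟪Zm d x, Zm d y⟫ ^ 2 := by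
  have hz : ⟪Zm d x, Zm d y⟫ = ∑ a, Zm d x a * Zm d y a := by
    rw [PiLp.inner_apply]; simp [RCLike.inner_apply']; exact Finset.sum_congr rfl fun i _ => mul_comm _ _
  rw [PiLp.inner_apply]
  simp only [RCLike.inner_apply', conj_trivial, Wm, WithLp.equiv_symm_apply, PiLp.toLp_apply]
  rw [Fintype.sum_prod_type, hz, sq, Finset.sum_mul_sum]
  exact Finset.sum_congr rfl fun a _ => Finset.sum_congr rfl fun b _ => by ring

lemma inner_Wm_Pm (hd : (d:ℝ) ≠ 0) (x : EuclideanSpace ℝ (Fin d)) (hx : ⟪x,x⟫ = 1) :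
    ⟪Wm d x, Pm d⟫ = 1 - 1/d := by
  have hxx : ∑ i, x i * x i = 1 := by
    rw [PiLp.inner_apply] at hx; simpa [RCLike.inner_apply, ← sq] using hx
  rw [PiLp.inner_apply]
  simp only [RCLike.inner_apply', conj_trivial, Wm, Pm, WithLp.equiv_symm_apply, PiLp.toLp_apply]
  rw [Fintype.sum_prod_type]
  have step : ∀ a : Fin d × Fin d, ∑ b, Zm d x a * Zm d x b * P0 d a b
      = Zm d x a * Zm d x a := by
    intro a
    rw [Finset.sum_congr rfl fun b _ => (mul_assoc _ _ _), ← Finset.mul_sum, sum_mul_P0,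
      Zm_trace x hd hxx, Zm_symm]
    ring
  rw [Finset.sum_congr rfl fun a _ => step a]
  have : ∑ a, Zm d x a * Zm d x a = ⟪Zm d x, Zm d x⟫ := by
    rw [PiLp.inner_apply]; simp [RCLike.inner_apply, ← sq]
  rw [this, inner_Zm d hd x x hx hx, hx]
  norm_num

lemma pointwise_rpow_bound (α p u : ℝ) (hα : 0 < α) (hα2 : α ≤ 1/2)
    (hp0 : 0 < p) (hp2 : p ≤ 2) (hu0 : 0 ≤ u) (hu1 : u ≤ 1) :
    (1 - α) ^ (p - 2) * (u - α) ^ 2 ≤ |u - α| ^ p := by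
  have h1α : 0 < 1 - α := by linarith
  have ht : |u - α| ≤ 1 - α := by
    rw [abs_le]; constructor <;> linarith
  rcases eq_or_lt_of_le (abs_nonneg (u - α)) with h0 | h0
  · have : u - α = 0 := by
      have := h0.symm; rwa [abs_eq_zero] at this
    rw [this]
    simp [Real.zero_rpow hp0.ne', abs_zero]
  · have key : (1 - α) ^ (p - 2) ≤ |u - α| ^ (p - 2) :=
      Real.rpow_le_rpow_of_nonpos h0 ht (by linarith)
    have hsq : (u - α) ^ 2 = |u - α| ^ (2:ℝ) := by
      rw [← sq_abs, ← Real.rpow_natCast |u - α| 2]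
      norm_num
    calc (1 - α) ^ (p - 2) * (u - α) ^ 2
        ≤ |u - α| ^ (p - 2) * (u - α) ^ 2 := by
          apply mul_le_mul_of_nonneg_right key (sq_nonneg _)
      _ = |u - α| ^ (p - 2) * |u - α| ^ (2:ℝ) := by rw [hsq]
      _ = |u - α| ^ p := by
          rw [← Real.rpow_add h0]
          norm_num

set_option maxHeartbeats 2000000 in
theorem lower_bound (d : ℕ) (hd : 2 ≤ d) (p : ℝ) (hp0 : 0 < p) (hp2 : p ≤ 2)
    (μ : Measure (Metric.sphere (0 : EuclideanSpace ℝ (Fin d)) 1)) (hμ : IsProbabilityMeasure μ) :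
    2 / ((d : ℝ) * ((d : ℝ) + 1)) * (((d : ℝ) + 1) / ((d : ℝ) + 2)) ^ p ≤
      ∫ x, ∫ y,
        |⟪(x : EuclideanSpace ℝ (Fin d)), (y : EuclideanSpace ℝ (Fin d))⟫ ^ 2
          - 1 / ((d : ℝ) + 2)| ^ p ∂μ ∂μ := by
  haveI := hμ
  have hd0 : (0:ℝ) < d := by
    have : (2:ℝ) ≤ d := by exact_mod_cast hd
    linarith
  have hdne : (d:ℝ) ≠ 0 := hd0.ne'
  set α : ℝ := 1 / ((d:ℝ) + 2) with hα
  set C : ℝ := (((d:ℝ) + 1) / ((d:ℝ) + 2)) ^ (p - 2) with hC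
  have hα0 : 0 < α := by rw [hα]; positivity
  have hd2 : (2:ℝ) ≤ (d:ℝ) := by exact_mod_cast hd
  have hα12 : α ≤ 1/2 := by
    rw [hα]
    exact one_div_le_one_div_of_le (by norm_num) (by linarith)
  have h1α : (1:ℝ) - α = ((d:ℝ) + 1) / ((d:ℝ) + 2) := by
    rw [hα]; field_simp; ring
  have hb0 : (0:ℝ) < ((d:ℝ) + 1) / ((d:ℝ) + 2) := by positivity
  have hC0 : 0 < C := Real.rpow_pos_of_pos hb0 _
  -- unit vectors
  have unit : ∀ x : Metric.sphere (0 : EuclideanSpace ℝ (Fin d)) 1,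
      ⟪(x : EuclideanSpace ℝ (Fin d)), (x : EuclideanSpace ℝ (Fin d))⟫ = 1 := by
    intro x
    have hx : ‖(x : EuclideanSpace ℝ (Fin d))‖ = 1 := by
      have := x.2
      simpa [mem_sphere_zero_iff_norm] using this
    rw [real_inner_self_eq_norm_sq, hx]; norm_num
  have usq : ∀ x y : Metric.sphere (0 : EuclideanSpace ℝ (Fin d)) 1,
      0 ≤ ⟪(x : EuclideanSpace ℝ (Fin d)), (y : EuclideanSpace ℝ (Fin d))⟫ ^ 2 ∧
        ⟪(x : EuclideanSpace ℝ (Fin d)), (y : EuclideanSpace ℝ (Fin d))⟫ ^ 2 ≤ 1 := by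
    intro x y
    refine ⟨by positivity, ?_⟩
    have h := real_inner_mul_inner_self_le
      (x : EuclideanSpace ℝ (Fin d)) (y : EuclideanSpace ℝ (Fin d))
    rw [unit x, unit y] at h
    calc ⟪(x : EuclideanSpace ℝ (Fin d)), (y : EuclideanSpace ℝ (Fin d))⟫ ^ 2
        = ⟪(x : EuclideanSpace ℝ (Fin d)), (y : EuclideanSpace ℝ (Fin d))⟫ *
          ⟪(x : EuclideanSpace ℝ (Fin d)), (y : EuclideanSpace ℝ (Fin d))⟫ := sq _
      _ ≤ 1 * 1 := h
      _ = 1 := one_mul 1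
  -- the two integrands on the product space
  set f : (Metric.sphere (0 : EuclideanSpace ℝ (Fin d)) 1) ×
      (Metric.sphere (0 : EuclideanSpace ℝ (Fin d)) 1) → ℝ := fun z =>
    |⟪(z.1 : EuclideanSpace ℝ (Fin d)), (z.2 : EuclideanSpace ℝ (Fin d))⟫ ^ 2 - α| ^ p with hf
  set g : (Metric.sphere (0 : EuclideanSpace ℝ (Fin d)) 1) ×
      (Metric.sphere (0 : EuclideanSpace ℝ (Fin d)) 1) → ℝ := fun z =>
    C * (⟪(z.1 : EuclideanSpace ℝ (Fin d)), (z.2 : EuclideanSpace ℝ (Fin d))⟫ ^ 2 - α) ^ 2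
    with hg
  have hfg : ∀ z, g z ≤ f z := by
    intro z
    have h := pointwise_rpow_bound α p
      (⟪(z.1 : EuclideanSpace ℝ (Fin d)), (z.2 : EuclideanSpace ℝ (Fin d))⟫ ^ 2)
      hα0 hα12 hp0 hp2 (usq z.1 z.2).1 (usq z.1 z.2).2
    rw [h1α] at h
    exact h
  -- continuity
  have hinner : Continuous fun z : (Metric.sphere (0 : EuclideanSpace ℝ (Fin d)) 1) ×
      (Metric.sphere (0 : EuclideanSpace ℝ (Fin d)) 1) =>
      (⟪(z.1 : EuclideanSpace ℝ (Fin d)), (z.2 : EuclideanSpace ℝ (Fin d))⟫ : ℝ) :=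
    continuous_inner.comp ((continuous_subtype_val.comp continuous_fst).prodMk
      (continuous_subtype_val.comp continuous_snd))
  have hfc : Continuous f :=
    (((hinner.pow 2).sub continuous_const).abs).rpow_const (fun z => Or.inr hp0.le)
  have hgc : Continuous g :=
    continuous_const.mul (((hinner.pow 2).sub continuous_const).pow 2)
  have hZcont : Continuous (fun x : EuclideanSpace ℝ (Fin d) => Zm d x) := by
    unfold Zm
    apply Continuous.comp (PiLp.continuous_toLp 2 _)
    apply continuous_pi
    intro ij
    exact (((continuous_apply ij.1).comp (PiLp.continuous_ofLp 2 _)).mul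
      ((continuous_apply ij.2).comp (PiLp.continuous_ofLp 2 _))).sub continuous_const
  have hWcont : Continuous (fun x : EuclideanSpace ℝ (Fin d) => Wm d x) := by
    unfold Wm
    apply Continuous.comp (PiLp.continuous_toLp 2 _)
    apply continuous_pi
    intro ab
    exact (((continuous_apply ab.1).comp ((PiLp.continuous_ofLp 2 _).comp hZcont)).mul
      ((continuous_apply ab.2).comp ((PiLp.continuous_ofLp 2 _).comp hZcont)))
  -- integrability: continuous functions on a compact space are integrable
  have integ : ∀ {X : Type} [TopologicalSpace X] [MeasurableSpace X] [OpensMeasurableSpace X]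
      [CompactSpace X] (ν : Measure X) [IsFiniteMeasure ν] {E : Type}
      [NormedAddCommGroup E] (h : X → E), Continuous h → Integrable h ν := by
    intro X _ _ _ _ ν _ E _ h hc
    exact hc.integrable_of_hasCompactSupport (HasCompactSupport.of_compactSpace h)
  have hfint : Integrable f (μ.prod μ) := integ _ f hfc
  have hgint : Integrable g (μ.prod μ) := integ _ g hgc
  have hZint : Integrable (fun x : Metric.sphere (0 : EuclideanSpace ℝ (Fin d)) 1 =>
    Zm d (x : EuclideanSpace ℝ (Fin d))) μ := integ _ _ (hZcont.comp continuous_subtype_val)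
  have hWint : Integrable (fun x : Metric.sphere (0 : EuclideanSpace ℝ (Fin d)) 1 =>
    Wm d (x : EuclideanSpace ℝ (Fin d))) μ := integ _ _ (hWcont.comp continuous_subtype_val)
  -- mean vectors
  set zbar := ∫ x : Metric.sphere (0 : EuclideanSpace ℝ (Fin d)) 1,
    Zm d (x : EuclideanSpace ℝ (Fin d)) ∂μ with hzbar
  set wbar := ∫ x : Metric.sphere (0 : EuclideanSpace ℝ (Fin d)) 1,
    Wm d (x : EuclideanSpace ℝ (Fin d)) ∂μ with hwbar
  have hZZint : Integrable (fun z : (Metric.sphere (0 : EuclideanSpace ℝ (Fin d)) 1) ×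
      (Metric.sphere (0 : EuclideanSpace ℝ (Fin d)) 1) =>
      ⟪Zm d (z.1 : EuclideanSpace ℝ (Fin d)), Zm d (z.2 : EuclideanSpace ℝ (Fin d))⟫) (μ.prod μ) :=
    integ _ _ (continuous_inner.comp
      (((hZcont.comp continuous_subtype_val).comp continuous_fst).prodMk
       ((hZcont.comp continuous_subtype_val).comp continuous_snd)))
  have hWWint : Integrable (fun z : (Metric.sphere (0 : EuclideanSpace ℝ (Fin d)) 1) ×
      (Metric.sphere (0 : EuclideanSpace ℝ (Fin d)) 1) =>
      ⟪Wm d (z.1 : EuclideanSpace ℝ (Fin d)), Wm d (z.2 : EuclideanSpace ℝ (Fin d))⟫) (μ.prod μ) :=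
    integ _ _ (continuous_inner.comp
      (((hWcont.comp continuous_subtype_val).comp continuous_fst).prodMk
       ((hWcont.comp continuous_subtype_val).comp continuous_snd)))
  -- second moment
  have hT2 : ∫ z : (Metric.sphere (0 : EuclideanSpace ℝ (Fin d)) 1) ×
      (Metric.sphere (0 : EuclideanSpace ℝ (Fin d)) 1),
      ⟪Zm d (z.1 : EuclideanSpace ℝ (Fin d)), Zm d (z.2 : EuclideanSpace ℝ (Fin d))⟫ ∂(μ.prod μ)
      = ⟪zbar, zbar⟫ := by
    rw [integral_prod _ hZZint]
    have e1 : ∀ x : Metric.sphere (0 : EuclideanSpace ℝ (Fin d)) 1,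
        ∫ y, ⟪Zm d (x : EuclideanSpace ℝ (Fin d)), Zm d (y : EuclideanSpace ℝ (Fin d))⟫ ∂μ
        = ⟪zbar, Zm d (x : EuclideanSpace ℝ (Fin d))⟫ := by
      intro x
      rw [integral_inner hZint]
      exact real_inner_comm _ _
    rw [integral_congr_ae (Filter.Eventually.of_forall e1), integral_inner hZint zbar]
  have hT4 : ∫ z : (Metric.sphere (0 : EuclideanSpace ℝ (Fin d)) 1) ×
      (Metric.sphere (0 : EuclideanSpace ℝ (Fin d)) 1),
      ⟪Wm d (z.1 : EuclideanSpace ℝ (Fin d)), Wm d (z.2 : EuclideanSpace ℝ (Fin d))⟫ ∂(μ.prod μ)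
      = ⟪wbar, wbar⟫ := by
    rw [integral_prod _ hWWint]
    have e1 : ∀ x : Metric.sphere (0 : EuclideanSpace ℝ (Fin d)) 1,
        ∫ y, ⟪Wm d (x : EuclideanSpace ℝ (Fin d)), Wm d (y : EuclideanSpace ℝ (Fin d))⟫ ∂μ
        = ⟪wbar, Wm d (x : EuclideanSpace ℝ (Fin d))⟫ := by
      intro x
      rw [integral_inner hWint]
      exact real_inner_comm _ _
    rw [integral_congr_ae (Filter.Eventually.of_forall e1), integral_inner hWint wbar]
  -- the P-contraction of wbar
  have hPbar : ⟪Pm d, wbar⟫ = 1 - 1/(d:ℝ) := by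
    rw [hwbar, ← integral_inner hWint (Pm d)]
    have e : ∀ x : Metric.sphere (0 : EuclideanSpace ℝ (Fin d)) 1,
        ⟪Pm d, Wm d (x : EuclideanSpace ℝ (Fin d))⟫ = 1 - 1/(d:ℝ) := by
      intro x
      rw [real_inner_comm]
      exact inner_Wm_Pm hdne _ (unit x)
    rw [integral_congr_ae (Filter.Eventually.of_forall e)]
    simp [measure_univ]
  -- Cauchy-Schwarz lower bound for the fourth moment
  have hNpos : (0:ℝ) < ((d:ℝ)^2 + (d:ℝ) - 2)/2 := by nlinarith [hd2, sq_nonneg ((d:ℝ) - 2)]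
  have hT4lb : (1 - 1/(d:ℝ))^2 / (((d:ℝ)^2 + (d:ℝ) - 2)/2) ≤ ⟪wbar, wbar⟫ := by
    have cs := real_inner_mul_inner_self_le (Pm d) wbar
    rw [norm_Pm_sq hdne, hPbar] at cs
    rw [div_le_iff₀ hNpos]
    calc (1 - 1/(d:ℝ))^2 = (1 - 1/(d:ℝ)) * (1 - 1/(d:ℝ)) := sq _
      _ ≤ ((d:ℝ)^2 + (d:ℝ) - 2)/2 * ⟪wbar, wbar⟫ := cs
      _ = ⟪wbar, wbar⟫ * (((d:ℝ)^2 + (d:ℝ) - 2)/2) := by ring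
  have hT2lb : (0:ℝ) ≤ ⟪zbar, zbar⟫ := real_inner_self_nonneg
  -- rewrite g's integral
  set c' : ℝ := 1/(d:ℝ) - α with hc'
  have hc'0 : 0 < c' := by
    rw [hc', hα, sub_pos, div_lt_div_iff₀ (by linarith) hd0]
    linarith
  have hgsplit : ∀ z : (Metric.sphere (0 : EuclideanSpace ℝ (Fin d)) 1) ×
      (Metric.sphere (0 : EuclideanSpace ℝ (Fin d)) 1), g z =
      C * ⟪Wm d (z.1 : EuclideanSpace ℝ (Fin d)), Wm d (z.2 : EuclideanSpace ℝ (Fin d))⟫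
        + (2 * C * c') * ⟪Zm d (z.1 : EuclideanSpace ℝ (Fin d)), Zm d (z.2 : EuclideanSpace ℝ (Fin d))⟫
        + C * c' ^ 2 := by
    intro z
    have h1 : ⟪Zm d (z.1 : EuclideanSpace ℝ (Fin d)), Zm d (z.2 : EuclideanSpace ℝ (Fin d))⟫
        = ⟪(z.1 : EuclideanSpace ℝ (Fin d)), (z.2 : EuclideanSpace ℝ (Fin d))⟫ ^ 2 - 1/(d:ℝ) :=
      inner_Zm d hdne _ _ (unit z.1) (unit z.2)
    have h2 : ⟪Wm d (z.1 : EuclideanSpace ℝ (Fin d)), Wm d (z.2 : EuclideanSpace ℝ (Fin d))⟫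
        = ⟪Zm d (z.1 : EuclideanSpace ℝ (Fin d)), Zm d (z.2 : EuclideanSpace ℝ (Fin d))⟫ ^ 2 :=
      inner_Wm _ _
    show C * (⟪(z.1 : EuclideanSpace ℝ (Fin d)), (z.2 : EuclideanSpace ℝ (Fin d))⟫ ^ 2 - α) ^ 2 = _
    rw [h2, h1, hc']
    ring
  have hgval : ∫ z, g z ∂(μ.prod μ)
      = C * ⟪wbar, wbar⟫ + (2 * C * c') * ⟪zbar, zbar⟫ + C * c' ^ 2 := by
    rw [integral_congr_ae (Filter.Eventually.of_forall hgsplit)]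
    have i1 : Integrable (fun z : (Metric.sphere (0 : EuclideanSpace ℝ (Fin d)) 1) ×
        (Metric.sphere (0 : EuclideanSpace ℝ (Fin d)) 1) =>
        C * ⟪Wm d (z.1 : EuclideanSpace ℝ (Fin d)), Wm d (z.2 : EuclideanSpace ℝ (Fin d))⟫
          + (2 * C * c') * ⟪Zm d (z.1 : EuclideanSpace ℝ (Fin d)),
              Zm d (z.2 : EuclideanSpace ℝ (Fin d))⟫) (μ.prod μ) :=
      (hWWint.const_mul C).add (hZZint.const_mul _)
    rw [integral_add i1 (integrable_const _),
      integral_add (hWWint.const_mul C) (hZZint.const_mul _),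
      integral_const_mul, integral_const_mul, integral_const, hT2, hT4]
    simp [measure_univ]
  -- final numeric comparison
  have key : 2 / ((d : ℝ) * ((d : ℝ) + 1)) * (((d : ℝ) + 1) / ((d : ℝ) + 2)) ^ p
      ≤ ∫ z, g z ∂(μ.prod μ) := by
    rw [hgval]
    have hrpow : (((d:ℝ) + 1) / ((d:ℝ) + 2)) ^ p
        = C * (((d:ℝ) + 1) / ((d:ℝ) + 2)) ^ (2:ℕ) := by
      rw [hC, ← Real.rpow_natCast (((d:ℝ) + 1) / ((d:ℝ) + 2)) 2, ← Real.rpow_add hb0]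
      norm_num
    have h4 : ((d:ℝ)^2 + (d:ℝ) - 2) ≠ 0 := by nlinarith [hd2, sq_nonneg ((d:ℝ) - 2)]
    have hident : 2 / ((d : ℝ) * ((d : ℝ) + 1)) * (((d : ℝ) + 1) / ((d : ℝ) + 2)) ^ (2:ℕ)
        = (1 - 1/(d:ℝ))^2 / (((d:ℝ)^2 + (d:ℝ) - 2)/2) + c' ^ 2 := by
      rw [hc', hα]
      have h2 : ((d:ℝ) + 2) ≠ 0 := by linarith
      have h3 : ((d:ℝ) + 1) ≠ 0 := by linarith
      have h5 : ((d:ℝ)^2 + (d:ℝ) - 2) = (d - 1) * (d + 2) := by ring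
      have h6 : (d:ℝ) - 1 ≠ 0 := by linarith
      rw [h5]
      field_simp
      ring
    have hstep : 0 ≤ (2 * C * c') * ⟪zbar, zbar⟫ :=
      mul_nonneg (by positivity) hT2lb
    calc 2 / ((d : ℝ) * ((d : ℝ) + 1)) * (((d : ℝ) + 1) / ((d : ℝ) + 2)) ^ p
        = C * (2 / ((d : ℝ) * ((d : ℝ) + 1)) * (((d : ℝ) + 1) / ((d : ℝ) + 2)) ^ (2:ℕ)) := by
          rw [hrpow]; ring
      _ = C * ((1 - 1/(d:ℝ))^2 / (((d:ℝ)^2 + (d:ℝ) - 2)/2) + c' ^ 2) := by rw [hident]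
      _ ≤ C * (⟪wbar, wbar⟫ + c' ^ 2) :=
          mul_le_mul_of_nonneg_left (add_le_add_left hT4lb _) hC0.le
      _ = C * ⟪wbar, wbar⟫ + C * c' ^ 2 := by ring
      _ ≤ C * ⟪wbar, wbar⟫ + (2 * C * c') * ⟪zbar, zbar⟫ + C * c' ^ 2 := by linarith
  -- put the chain together
  have hmono : ∫ z, g z ∂(μ.prod μ) ≤ ∫ z, f z ∂(μ.prod μ) :=
    integral_mono hgint hfint hfg
  have hiter : ∫ z, f z ∂(μ.prod μ)
      = ∫ x, ∫ y,
        |⟪(x : EuclideanSpace ℝ (Fin d)), (y : EuclideanSpace ℝ (Fin d))⟫ ^ 2 - α| ^ p ∂μ ∂μ :=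
    integral_prod f hfint
  -- goal already phrased with α via set
  calc 2 / ((d : ℝ) * ((d : ℝ) + 1)) * (((d : ℝ) + 1) / ((d : ℝ) + 2)) ^ p
      ≤ ∫ z, g z ∂(μ.prod μ) := key
    _ ≤ ∫ z, f z ∂(μ.prod μ) := hmono
    _ = _ := hiter

set_option maxHeartbeats 1000000 in
theorem etf_value (d : ℕ) (hd : 2 ≤ d) (p : ℝ) (hp0 : 0 < p)
    (φ : Fin (d * (d + 1) / 2) → Metric.sphere (0 : EuclideanSpace ℝ (Fin d)) 1)
    (hφ : ∀ i j, i ≠ j →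
      ⟪(φ i : EuclideanSpace ℝ (Fin d)), (φ j : EuclideanSpace ℝ (Fin d))⟫ ^ 2
        = 1 / ((d : ℝ) + 2)) :
    (∫ x, ∫ y,
        |⟪(x : EuclideanSpace ℝ (Fin d)), (y : EuclideanSpace ℝ (Fin d))⟫ ^ 2
          - 1 / ((d : ℝ) + 2)| ^ p
        ∂(((d * (d + 1) / 2 : ℕ) : ℝ≥0∞)⁻¹ • ∑ i, Measure.dirac (φ i))
        ∂(((d * (d + 1) / 2 : ℕ) : ℝ≥0∞)⁻¹ • ∑ i, Measure.dirac (φ i))) =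
      2 / ((d : ℝ) * ((d : ℝ) + 1)) * (((d : ℝ) + 1) / ((d : ℝ) + 2)) ^ p := by
  have hd0 : (0:ℝ) < d := by
    have : (2:ℝ) ≤ d := by exact_mod_cast hd
    linarith
  have hM2 : (d * (d + 1) / 2) * 2 = d * (d + 1) :=
    Nat.div_mul_cancel (even_iff_two_dvd.1 (Nat.even_mul_succ_self d))
  have hMpos : 0 < d * (d + 1) / 2 := by
    apply Nat.div_pos _ (by norm_num)
    calc 2 ≤ d := hd
      _ ≤ d * (d + 1) := Nat.le_mul_of_pos_right d (by omega)
  have hMR : ((d * (d + 1) / 2 : ℕ):ℝ) * 2 = (d:ℝ) * ((d:ℝ) + 1) := by exact_mod_cast hM2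
  have hMne : ((d * (d + 1) / 2 : ℕ):ℝ) ≠ 0 := by
    simp only [ne_eq, Nat.cast_eq_zero]
    omega
  have htoReal : (((d * (d + 1) / 2 : ℕ) : ℝ≥0∞)⁻¹).toReal = ((d * (d + 1) / 2 : ℕ):ℝ)⁻¹ := by
    rw [ENNReal.toReal_inv]
    simp
  -- generic evaluation of integrals against the ETF measure
  have eval : ∀ F : (Metric.sphere (0 : EuclideanSpace ℝ (Fin d)) 1) → ℝ, Continuous F →
      ∫ x, F x ∂(((d * (d + 1) / 2 : ℕ) : ℝ≥0∞)⁻¹ • ∑ i, Measure.dirac (φ i))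
        = ((d * (d + 1) / 2 : ℕ):ℝ)⁻¹ * ∑ i, F (φ i) := by
    intro F hF
    rw [integral_smul_measure,
      integral_finset_sum_measure (fun i _ =>
        hF.integrable_of_hasCompactSupport (HasCompactSupport.of_compactSpace F)),
      Finset.sum_congr rfl (fun i _ => integral_dirac F (φ i)), htoReal, smul_eq_mul]
  -- continuity of kernel sections
  have kx : ∀ x : Metric.sphere (0 : EuclideanSpace ℝ (Fin d)) 1,
      Continuous (fun y : Metric.sphere (0 : EuclideanSpace ℝ (Fin d)) 1 =>
        |⟪(x : EuclideanSpace ℝ (Fin d)), (y : EuclideanSpace ℝ (Fin d))⟫ ^ 2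
          - 1 / ((d : ℝ) + 2)| ^ p) := by
    intro x
    apply Continuous.rpow_const _ (fun _ => Or.inr hp0.le)
    apply Continuous.abs
    apply Continuous.sub _ continuous_const
    apply Continuous.pow
    exact Continuous.inner continuous_const continuous_subtype_val
  have ky : ∀ j, Continuous (fun x : Metric.sphere (0 : EuclideanSpace ℝ (Fin d)) 1 =>
      |⟪(x : EuclideanSpace ℝ (Fin d)), (φ j : EuclideanSpace ℝ (Fin d))⟫ ^ 2
        - 1 / ((d : ℝ) + 2)| ^ p) := by
    intro j
    apply Continuous.rpow_const _ (fun _ => Or.inr hp0.le)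
    apply Continuous.abs
    apply Continuous.sub _ continuous_const
    apply Continuous.pow
    exact Continuous.inner continuous_subtype_val continuous_const
  -- inner integral
  have inner_eval : ∀ x : Metric.sphere (0 : EuclideanSpace ℝ (Fin d)) 1,
      ∫ y, |⟪(x : EuclideanSpace ℝ (Fin d)), (y : EuclideanSpace ℝ (Fin d))⟫ ^ 2
        - 1 / ((d : ℝ) + 2)| ^ p ∂(((d * (d + 1) / 2 : ℕ) : ℝ≥0∞)⁻¹ • ∑ i, Measure.dirac (φ i))
      = ((d * (d + 1) / 2 : ℕ):ℝ)⁻¹ *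
          ∑ j, |⟪(x : EuclideanSpace ℝ (Fin d)), (φ j : EuclideanSpace ℝ (Fin d))⟫ ^ 2
            - 1 / ((d : ℝ) + 2)| ^ p := by
    intro x
    exact eval _ (kx x)
  rw [integral_congr_ae (Filter.Eventually.of_forall inner_eval)]
  have outer_cont : Continuous fun x : Metric.sphere (0 : EuclideanSpace ℝ (Fin d)) 1 =>
      ((d * (d + 1) / 2 : ℕ):ℝ)⁻¹ *
        ∑ j, |⟪(x : EuclideanSpace ℝ (Fin d)), (φ j : EuclideanSpace ℝ (Fin d))⟫ ^ 2
          - 1 / ((d : ℝ) + 2)| ^ p := by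
    apply continuous_const.mul
    apply continuous_finset_sum
    intro j _
    exact ky j
  rw [eval _ outer_cont]
  -- evaluate the double sum
  have unit : ∀ x : Metric.sphere (0 : EuclideanSpace ℝ (Fin d)) 1,
      ⟪(x : EuclideanSpace ℝ (Fin d)), (x : EuclideanSpace ℝ (Fin d))⟫ = 1 := by
    intro x
    have hx : ‖(x : EuclideanSpace ℝ (Fin d))‖ = 1 := by
      have := x.2
      simpa [mem_sphere_zero_iff_norm] using this
    rw [real_inner_self_eq_norm_sq, hx]; norm_num
  have diag : ∀ i, |⟪(φ i : EuclideanSpace ℝ (Fin d)), (φ i : EuclideanSpace ℝ (Fin d))⟫ ^ 2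
      - 1 / ((d : ℝ) + 2)| ^ p = (((d:ℝ) + 1) / ((d:ℝ) + 2)) ^ p := by
    intro i
    rw [unit (φ i)]
    have h1 : (1:ℝ) ^ 2 - 1 / ((d:ℝ) + 2) = ((d:ℝ) + 1) / ((d:ℝ) + 2) := by
      have h2 : ((d:ℝ) + 2) ≠ 0 := by linarith
      field_simp
      ring
    rw [h1, abs_of_pos (by positivity)]
  have offdiag : ∀ i j, i ≠ j →
      |⟪(φ i : EuclideanSpace ℝ (Fin d)), (φ j : EuclideanSpace ℝ (Fin d))⟫ ^ 2
      - 1 / ((d : ℝ) + 2)| ^ p = 0 := by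
    intro i j hij
    rw [hφ i j hij, sub_self, abs_zero, Real.zero_rpow hp0.ne']
  have row : ∀ i, (∑ j, |⟪(φ i : EuclideanSpace ℝ (Fin d)), (φ j : EuclideanSpace ℝ (Fin d))⟫ ^ 2
      - 1 / ((d : ℝ) + 2)| ^ p) = (((d:ℝ) + 1) / ((d:ℝ) + 2)) ^ p := by
    intro i
    rw [Finset.sum_eq_single i (fun j _ hj => offdiag i j (Ne.symm hj))
      (fun h => absurd (Finset.mem_univ i) h)]
    exact diag i
  rw [Finset.sum_congr rfl
    (fun i _ => congrArg (fun t => ((d * (d + 1) / 2 : ℕ):ℝ)⁻¹ * t) (row i))]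
  rw [Finset.sum_const, Finset.card_univ, Fintype.card_fin, nsmul_eq_mul]
  have hfin : 2 / ((d : ℝ) * ((d : ℝ) + 1)) = ((d * (d + 1) / 2 : ℕ):ℝ)⁻¹ := by
    rw [← hMR]
    field_simp
  rw [hfin]
  field_simp

/-- For `d ≥ 2` and `p ∈ (0, 2]`, if a maximal real equiangular tight frame
`φ₁, …, φ_M ⊂ S^{d-1}` with `M = d(d+1)/2` and `⟪φᵢ, φⱼ⟫² = 1/(d+2)` for `i ≠ j`
exists, then every Borel probability measure `μ` on `S^{d-1}` satisfies
`∫∫ |⟪x, y⟫² - 1/(d+2)|^p dμ dμ ≥ (2/(d(d+1))) ((d+1)/(d+2))^p`, with equality for the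
uniform (counting) probability measure on the points of the maximal ETF. -/
theorem maximal_etf_minimizes_energy (d : ℕ) (hd : 2 ≤ d) (p : ℝ) (hp0 : 0 < p)
    (hp2 : p ≤ 2)
    (φ : Fin (d * (d + 1) / 2) → Metric.sphere (0 : EuclideanSpace ℝ (Fin d)) 1)
    (hφ : ∀ i j, i ≠ j →
      ⟪(φ i : EuclideanSpace ℝ (Fin d)), (φ j : EuclideanSpace ℝ (Fin d))⟫ ^ 2
        = 1 / ((d : ℝ) + 2)) :
    (∀ μ : Measure (Metric.sphere (0 : EuclideanSpace ℝ (Fin d)) 1),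
      IsProbabilityMeasure μ →
      2 / ((d : ℝ) * ((d : ℝ) + 1)) * (((d : ℝ) + 1) / ((d : ℝ) + 2)) ^ p ≤
        ∫ x, ∫ y,
          |⟪(x : EuclideanSpace ℝ (Fin d)), (y : EuclideanSpace ℝ (Fin d))⟫ ^ 2
            - 1 / ((d : ℝ) + 2)| ^ p ∂μ ∂μ) ∧
    (∫ x, ∫ y,
        |⟪(x : EuclideanSpace ℝ (Fin d)), (y : EuclideanSpace ℝ (Fin d))⟫ ^ 2
          - 1 / ((d : ℝ) + 2)| ^ p
        ∂(((d * (d + 1) / 2 : ℕ) : ℝ≥0∞)⁻¹ • ∑ i, Measure.dirac (φ i))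
        ∂(((d * (d + 1) / 2 : ℕ) : ℝ≥0∞)⁻¹ • ∑ i, Measure.dirac (φ i))) =
      2 / ((d : ℝ) * ((d : ℝ) + 1)) * (((d : ℝ) + 1) / ((d : ℝ) + 2)) ^ p := by
  constructor
  · intro μ hμ
    exact lower_bound d hd p hp0 hp2 μ hμ
  · exact etf_value d hd p hp0 φ hφ
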